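/- Let φ be a continuous flow on a closed surface with the oriented shadowing property, and let p be a singularity admitting a closed disk neighborhood D containing no α- or ω-limit point except p. If p is neither asymptotically stable nor backward asymptotically stable, then there exists x ∈ ∂D whose negative orbit is contained in D with φ(t,x) → p as t → -∞, and there exists y ∈ ∂D whose positive orbit is contained in D with φ(t,y) → p as t → +∞. -/

import Mathlib

open Set Filter Metric Topology

/-- A continuous flow on `M`. -/
def IsFlow {M : Type*} [TopologicalSpace M] (φ : ℝ × M → M) : Prop :=
  Continuous φ ∧ (∀ x, φ (0, x) = x) ∧ ∀ s t x, φ (s + t, x) = φ (s, φ (t, x))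

/-- Orientation preserving homeomorphism of `ℝ`. -/
def IsRep (f : ℝ → ℝ) : Prop :=
  Continuous f ∧ Function.Bijective f ∧ StrictMono f

/-- Element of `Rep(ε)`: all difference quotients within `ε` of `1`. -/
def IsRepE (ε : ℝ) (f : ℝ → ℝ) : Prop :=
  IsRep f ∧ ∀ a b : ℝ, b < a → |(f a - f b) / (a - b) - 1| < ε

/-- A `d`-pseudotrajectory of the flow `φ`. -/
def IsPseudo {M : Type*} [PseudoMetricSpace M] (φ : ℝ × M → M) (d : ℝ) (ξ : ℝ → M) : Prop :=
  ∀ t : ℝ, ∀ s ∈ Set.Icc (0:ℝ) 1, dist (ξ (t + s)) (φ (s, ξ t)) < d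

/-- The standard shadowing property. -/
def StandardShadowing {M : Type*} [PseudoMetricSpace M] (φ : ℝ × M → M) : Prop :=
  ∀ ε > 0, ∃ d > 0, ∀ ξ : ℝ → M, IsPseudo φ d ξ →
    ∃ x : M, ∃ h : ℝ → ℝ, IsRepE ε h ∧ ∀ t, dist (ξ t) (φ (h t, x)) < ε

/-- The oriented shadowing property. -/
def OrientedShadowing {M : Type*} [PseudoMetricSpace M] (φ : ℝ × M → M) : Prop :=
  ∀ ε > 0, ∃ d > 0, ∀ ξ : ℝ → M, IsPseudo φ d ξ →
    ∃ x : M, ∃ h : ℝ → ℝ, IsRep h ∧ ∀ t, dist (ξ t) (φ (h t, x)) < ε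

/-- A singularity (fixed point) of the flow. -/
def IsSingularity {M : Type*} (φ : ℝ × M → M) (p : M) : Prop :=
  ∀ t : ℝ, φ (t, p) = p

/-- A closed (periodic, non-fixed) orbit of the flow. -/
def IsClosedOrbit {M : Type*} (φ : ℝ × M → M) (Λ : Set M) : Prop :=
  ∃ (x₀ : M) (T : ℝ), 0 < T ∧ φ (T, x₀) = x₀ ∧ (∀ t ∈ Set.Ioo 0 T, φ (t, x₀) ≠ x₀) ∧
    Λ = Set.range (fun t : ℝ => φ (t, x₀))

/-- A critical element: a singularity or a closed orbit. -/
def IsCriticalElement {M : Type*} (φ : ℝ × M → M) (Λ : Set M) : Prop :=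
  (∃ p, IsSingularity φ p ∧ Λ = {p}) ∨ IsClosedOrbit φ Λ

/-- A nonwandering point of the flow. -/
def IsNonWandering {M : Type*} [TopologicalSpace M] (φ : ℝ × M → M) (x : M) : Prop :=
  ∀ V : Set M, IsOpen V → x ∈ V → ∀ T > 0, ∃ t > T, ∃ y ∈ V, φ (t, y) ∈ V

/-- The ω-limit set of a point. -/
def OmegaLim {M : Type*} [PseudoMetricSpace M] (φ : ℝ × M → M) (x : M) : Set M :=
  {y | ∀ ε > 0, ∀ T : ℝ, ∃ t > T, dist (φ (t, x)) y < ε}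

/-- The α-limit set of a point. -/
def AlphaLim {M : Type*} [PseudoMetricSpace M] (φ : ℝ × M → M) (x : M) : Set M :=
  {y | ∀ ε > 0, ∀ T : ℝ, ∃ t < T, dist (φ (t, x)) y < ε}

/-- Asymptotic stability of a compact invariant set `K`. -/
def IsAsympStable {M : Type*} [MetricSpace M] (φ : ℝ × M → M) (K : Set M) : Prop :=
  ∀ V : Set M, IsOpen V → K ⊆ V → ∃ U : Set M, IsOpen U ∧ K ⊆ U ∧ ∀ x ∈ U,
    (∀ t ≥ (0:ℝ), φ (t, x) ∈ V) ∧
    Tendsto (fun t => Metric.infDist (φ (t, x)) K) atTop (nhds 0)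

/-- Backward asymptotic stability of a compact invariant set `K`. -/
def IsBackAsympStable {M : Type*} [MetricSpace M] (φ : ℝ × M → M) (K : Set M) : Prop :=
  ∀ V : Set M, IsOpen V → K ⊆ V → ∃ U : Set M, IsOpen U ∧ K ⊆ U ∧ ∀ x ∈ U,
    (∀ t ≤ (0:ℝ), φ (t, x) ∈ V) ∧
    Tendsto (fun t => Metric.infDist (φ (t, x)) K) atBot (nhds 0)

/-- A closed neighborhood of `p` homeomorphic to a closed 2-disk. -/
def IsDiskNbhd {M : Type*} [MetricSpace M] (p : M) (D : Set M) : Prop :=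
  D ∈ nhds p ∧ IsClosed D ∧
    Nonempty (D ≃ₜ (Metric.closedBall (0 : EuclideanSpace ℝ (Fin 2)) 1))

/-- `D` contains no α- or ω-limit point except `p`. -/
def NoLimitPointsExcept {M : Type*} [MetricSpace M] (φ : ℝ × M → M) (p : M)
    (D : Set M) : Prop :=
  ∀ x y : M, y ∈ D → y ∈ AlphaLim φ x ∪ OmegaLim φ x → y = p

section Helpers
variable {M : Type*} [MetricSpace M] [CompactSpace M]

lemma unif_cont (φ : ℝ × M → M) (hc : Continuous φ) {d : ℝ} (hd : 0 < d) :
    ∃ η > 0, ∀ a b : M, dist a b < η → ∀ s ∈ Icc (0:ℝ) 1, dist (φ (s, a)) (φ (s, b)) < d := by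
  have hK : IsCompact ((Icc (0:ℝ) 1) ×ˢ (univ : Set M)) := isCompact_Icc.prod isCompact_univ
  have huc := hK.uniformContinuousOn_of_continuous hc.continuousOn
  rw [Metric.uniformContinuousOn_iff] at huc
  obtain ⟨δ, hδ, hδ'⟩ := huc d hd
  refine ⟨δ, hδ, fun a b hab s hs => ?_⟩
  have h1 : ((s, a) : ℝ × M) ∈ (Icc (0:ℝ) 1) ×ˢ (univ : Set M) := ⟨hs, mem_univ _⟩
  have h2 : ((s, b) : ℝ × M) ∈ (Icc (0:ℝ) 1) ×ˢ (univ : Set M) := ⟨hs, mem_univ _⟩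
  refine hδ' _ h1 _ h2 ?_
  rw [Prod.dist_eq]
  simp only [dist_self]
  rw [max_eq_right dist_nonneg]
  exact hab

lemma subseq_compact (u : ℕ → M) :
    ∃ q : M, ∃ k : ℕ → ℕ, StrictMono k ∧ Tendsto (u ∘ k) atTop (𝓝 q) := by
  obtain ⟨q, _, k, hk, hq⟩ := isCompact_univ.tendsto_subseq (x := u) (fun n => mem_univ _)
  exact ⟨q, k, hk, hq⟩

end Helpers

section Tend
variable {M : Type*} [MetricSpace M] [CompactSpace M]

lemma tendsto_top_of_forward (φ : ℝ × M → M) (hφ : IsFlow φ) (p : M) (D : Set M)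
    (hDc : IsClosed D) (hlim : NoLimitPointsExcept φ p D) (y : M)
    (hy : ∀ t ≥ (0:ℝ), φ (t, y) ∈ D) :
    Tendsto (fun t => φ (t, y)) atTop (𝓝 p) := by
  rw [Metric.tendsto_nhds]
  by_contra hcon
  push_neg at hcon
  obtain ⟨ε, hε, hfreq⟩ := hcon
  have hcon' : ∀ N : ℝ, ∃ t, N ≤ t ∧ ε ≤ dist (φ (t, y)) p := by
    intro N
    obtain ⟨t, ht1, ht2⟩ := (hfreq.and_eventually (eventually_ge_atTop N)).exists
    exact ⟨t, ht2, ht1⟩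
  choose u hu1 hu2 using hcon'
  set v : ℕ → M := fun n => φ (u n, y) with hv
  obtain ⟨q, k, hkm, hq⟩ := subseq_compact v
  have huge : ∀ n : ℕ, (n:ℝ) ≤ u n := fun n => hu1 n
  have hvD : ∀ n, v n ∈ D := fun n => hy _ (le_trans (Nat.cast_nonneg n) (huge n))
  have hqD : q ∈ D := hDc.mem_of_tendsto hq (Eventually.of_forall fun j => hvD _)
  have hqω : q ∈ OmegaLim φ y := by
    simp only [OmegaLim, mem_setOf_eq]
    intro ε' hε' T
    have h1 : ∀ᶠ j in atTop, dist (v (k j)) q < ε' := Metric.tendsto_nhds.1 hq ε' hε'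
    have h2 : ∀ᶠ j : ℕ in atTop, T < (j:ℝ) :=
      tendsto_natCast_atTop_atTop.eventually_gt_atTop T
    obtain ⟨j, hj1, hj2⟩ := (h1.and h2).exists
    refine ⟨u (k j), lt_of_lt_of_le hj2 ?_, hj1⟩
    exact le_trans (Nat.cast_le.2 hkm.le_apply) (huge (k j))
  have hqp : q = p := hlim y q hqD (Or.inr hqω)
  obtain ⟨j, hj⟩ := (Metric.tendsto_nhds.1 hq ε hε).exists
  rw [hqp] at hj
  exact absurd hj (not_lt.2 (hu2 _))

lemma tendsto_bot_of_backward (φ : ℝ × M → M) (hφ : IsFlow φ) (p : M) (D : Set M)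
    (hDc : IsClosed D) (hlim : NoLimitPointsExcept φ p D) (y : M)
    (hy : ∀ t ≤ (0:ℝ), φ (t, y) ∈ D) :
    Tendsto (fun t => φ (t, y)) atBot (𝓝 p) := by
  rw [Metric.tendsto_nhds]
  by_contra hcon
  push_neg at hcon
  obtain ⟨ε, hε, hfreq⟩ := hcon
  have hcon' : ∀ N : ℝ, ∃ t, t ≤ N ∧ ε ≤ dist (φ (t, y)) p := by
    intro N
    obtain ⟨t, ht1, ht2⟩ := (hfreq.and_eventually (eventually_le_atBot N)).exists
    exact ⟨t, ht2, ht1⟩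
  choose u hu1 hu2 using hcon'
  set v : ℕ → M := fun n => φ (u (-(n:ℝ)), y) with hv
  obtain ⟨q, k, hkm, hq⟩ := subseq_compact v
  have huge : ∀ n : ℕ, u (-(n:ℝ)) ≤ -(n:ℝ) := fun n => hu1 _
  have hvD : ∀ n, v n ∈ D := fun n =>
    hy _ (le_trans (huge n) (neg_nonpos.2 (Nat.cast_nonneg n)))
  have hqD : q ∈ D := hDc.mem_of_tendsto hq (Eventually.of_forall fun j => hvD _)
  have hqα : q ∈ AlphaLim φ y := by
    simp only [AlphaLim, mem_setOf_eq]
    intro ε' hε' T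
    have h1 : ∀ᶠ j in atTop, dist (v (k j)) q < ε' := Metric.tendsto_nhds.1 hq ε' hε'
    have h2 : ∀ᶠ j : ℕ in atTop, -T < (j:ℝ) :=
      tendsto_natCast_atTop_atTop.eventually_gt_atTop (-T)
    obtain ⟨j, hj1, hj2⟩ := (h1.and h2).exists
    refine ⟨u (-((k j : ℕ):ℝ)), ?_, hj1⟩
    have : -((k j : ℕ):ℝ) ≤ -(j:ℝ) := neg_le_neg (Nat.cast_le.2 hkm.le_apply)
    calc u (-((k j : ℕ):ℝ)) ≤ -((k j : ℕ):ℝ) := huge _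
    _ ≤ -(j:ℝ) := this
    _ < T := by linarith
  have hqp : q = p := hlim y q hqD (Or.inl hqα)
  obtain ⟨j, hj⟩ := (Metric.tendsto_nhds.1 hq ε hε).exists
  rw [hqp] at hj
  exact absurd hj (not_lt.2 (hu2 _))

end Tend

section Half
variable {M : Type*} [MetricSpace M] [CompactSpace M]

lemma half (φ : ℝ × M → M) (hφ : IsFlow φ) (hsh : OrientedShadowing φ)
    (p : M) (hp : IsSingularity φ p) (D : Set M)
    (hDn : D ∈ 𝓝 p) (hDc : IsClosed D) (hlim : NoLimitPointsExcept φ p D)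
    (hns : ¬ IsAsympStable φ {p}) :
    ∃ x ∈ frontier D, (∀ t ≤ (0:ℝ), φ (t, x) ∈ D) ∧
      Tendsto (fun t => φ (t, x)) atBot (𝓝 p) := by
  obtain ⟨hc, h0, hadd⟩ := hφ
  have hcont1 : ∀ s : ℝ, Continuous fun m : M => φ (s, m) :=
    fun s => hc.comp (continuous_const.prodMk continuous_id)
  have hcont2 : ∀ m : M, Continuous fun t : ℝ => φ (t, m) :=
    fun m => hc.comp (continuous_id.prodMk continuous_const)
  rw [IsAsympStable] at hns
  push_neg at hns
  obtain ⟨V, hVo, hpV, hV⟩ := hns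
  set W := V ∩ interior D with hWdef
  have hWo : IsOpen W := hVo.inter isOpen_interior
  have hpW : p ∈ W := ⟨singleton_subset_iff.1 hpV, mem_interior_iff_mem_nhds.2 hDn⟩
  have hWD : W ⊆ D := fun x hx => interior_subset hx.2
  -- Step 2
  have key : ∀ r > (0:ℝ), ∃ x, dist x p < r ∧ x ∈ W ∧ ∃ t ≥ (0:ℝ), φ (t, x) ∉ W := by
    intro r hr
    obtain ⟨x, hxU, hxP⟩ := hV (ball p r ∩ W) (isOpen_ball.inter hWo)
      (singleton_subset_iff.2 ⟨mem_ball_self hr, hpW⟩)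
    refine ⟨x, mem_ball.1 hxU.1, hxU.2, ?_⟩
    by_contra hcon
    push_neg at hcon
    have hA : ∀ t ≥ (0:ℝ), φ (t, x) ∈ V := fun t ht => (hcon t ht).1
    have htend : Tendsto (fun t => φ (t, x)) atTop (𝓝 p) :=
      tendsto_top_of_forward φ ⟨hc, h0, hadd⟩ p D hDc hlim x
        (fun t ht => hWD (hcon t ht))
    have hB : Tendsto (fun t => Metric.infDist (φ (t, x)) {p}) atTop (𝓝 0) := by
      simp only [Metric.infDist_singleton]
      exact tendsto_iff_dist_tendsto_zero.1 htend
    exact hxP hA hB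
  -- Step 3: sequences
  have key2 : ∀ n : ℕ, ∃ x, dist x p < 1/((n:ℝ)+1) ∧ x ∈ W ∧ ∃ t ≥ (0:ℝ), φ (t, x) ∉ W :=
    fun n => key _ (by positivity)
  choose X hX1 hX2 hX3 using key2
  set S : ℕ → Set ℝ := fun n => {t : ℝ | 0 ≤ t ∧ φ (t, X n) ∉ W} with hSdef
  have hSne : ∀ n, (S n).Nonempty := by
    intro n; obtain ⟨t, ht, htW⟩ := hX3 n; exact ⟨t, ht, htW⟩
  have hSbd : ∀ n, BddBelow (S n) := fun n => ⟨0, fun t ht => ht.1⟩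
  have hScl : ∀ n, IsClosed (S n) := by
    intro n
    have : S n = Ici (0:ℝ) ∩ (fun t => φ (t, X n)) ⁻¹' Wᶜ := rfl
    rw [this]
    exact isClosed_Ici.inter (hWo.isClosed_compl.preimage (hcont2 _))
  set σ : ℕ → ℝ := fun n => sInf (S n) with hσdef
  have hσmem : ∀ n, σ n ∈ S n := fun n => (hScl n).csInf_mem (hSne n) (hSbd n)
  have hσ0 : ∀ n, 0 ≤ σ n := fun n => (hσmem n).1
  have hσW : ∀ n, φ (σ n, X n) ∉ W := fun n => (hσmem n).2
  have hσpos : ∀ n, 0 < σ n := by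
    intro n
    rcases (hσ0 n).lt_or_eq with h | h
    · exact h
    · exfalso; apply hσW n; rw [← h, h0]; exact hX2 n
  have hbefore : ∀ n, ∀ s, 0 ≤ s → s < σ n → φ (s, X n) ∈ W := by
    intro n s h1 h2
    by_contra hcc
    exact absurd (csInf_le (hSbd n) ⟨h1, hcc⟩) (not_le.2 h2)
  have hclos : ∀ n, φ (σ n, X n) ∈ closure W := by
    intro n
    have hmem : σ n ∈ closure (Ioo 0 (σ n)) := by
      rw [closure_Ioo (hσpos n).ne]
      exact ⟨(hσ0 n), le_rfl⟩
    have h1 := (hcont2 (X n)).continuousWithinAt.mem_closure_image hmem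
    refine closure_mono ?_ h1
    rw [image_subset_iff]
    exact fun s hs => hbefore n s hs.1.le hs.2
  -- Step 4: σ grows
  have hgrow : ∀ T : ℝ, ∃ N : ℕ, ∀ n ≥ N, T < σ n := by
    intro T
    rcases le_or_gt T 0 with h | h
    · exact ⟨0, fun n _ => lt_of_le_of_lt h (hσpos n)⟩
    · have hsub : (Icc (0:ℝ) T) ×ˢ ({p} : Set M) ⊆ φ ⁻¹' W := by
        rintro ⟨t, m⟩ ⟨ht, hm⟩
        simp only [mem_singleton_iff] at hm
        subst hm
        simp only [mem_preimage]
        rw [hp t]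
        exact hpW
      obtain ⟨u, v, huo, hvo, hsu, hsv, huv⟩ :=
        generalized_tube_lemma isCompact_Icc isCompact_singleton (hWo.preimage hc) hsub
      obtain ⟨r, hr, hball⟩ := Metric.isOpen_iff.1 hvo p (hsv rfl)
      obtain ⟨N, hN⟩ := exists_nat_one_div_lt hr
      refine ⟨N, fun n hn => ?_⟩
      have hXv : X n ∈ v := by
        apply hball
        rw [mem_ball]
        refine lt_of_lt_of_le (hX1 n) (le_trans ?_ hN.le)
        apply one_div_le_one_div_of_le
        · positivity
        · exact_mod_cast Nat.succ_le_succ hn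
      by_contra hTn
      push_neg at hTn
      apply hσW n
      exact huv ⟨hsu ⟨hσ0 n, hTn⟩, hXv⟩
  -- Step 5: limit point y
  set yseq : ℕ → M := fun n => φ (σ n, X n) with hyseq
  obtain ⟨y, k, hkm, hky⟩ := subseq_compact yseq
  have hclWD : closure W ⊆ D := by
    calc closure W ⊆ closure D := closure_mono (fun x hx => interior_subset hx.2)
    _ = D := hDc.closure_eq
  have hyD : y ∈ D := hclWD (isClosed_closure.mem_of_tendsto hky
    (Eventually.of_forall fun j => hclos (k j)))
  have hynW : y ∉ W := by
    have : y ∈ Wᶜ := hWo.isClosed_compl.mem_of_tendsto hky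
      (Eventually.of_forall fun j => hσW (k j))
    exact this
  have hyp : y ≠ p := fun h => hynW (h ▸ hpW)
  have hyback : ∀ s ≤ (0:ℝ), φ (s, y) ∈ D := by
    intro s hs
    have htd : Tendsto (fun j => φ (s, yseq (k j))) atTop (𝓝 (φ (s, y))) :=
      ((hcont1 s).tendsto y).comp hky
    apply hDc.mem_of_tendsto htd
    obtain ⟨N, hN⟩ := hgrow (-s)
    filter_upwards [eventually_ge_atTop N] with j hj
    have hσs : -s < σ (k j) := hN _ (le_trans hj hkm.le_apply)
    rcases hs.lt_or_eq with hlt | hzero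
    · have heq : φ (s, yseq (k j)) = φ (s + σ (k j), X (k j)) := by
        rw [hadd]
      rw [heq]
      exact hWD (hbefore _ _ (by linarith) (by linarith))
    · rw [hzero, h0]
      exact hclWD (hclos _)
  -- Step 6
  by_cases hexit : ∃ t ≥ (0:ℝ), φ (t, y) ∉ D
  · -- Case A: forward orbit of y exits D
    set E := {t : ℝ | 0 ≤ t ∧ φ (t, y) ∉ D} with hEdef
    have hEne : E.Nonempty := by obtain ⟨t, ht, htD⟩ := hexit; exact ⟨t, ht, htD⟩
    have hEbd : BddBelow E := ⟨0, fun t ht => ht.1⟩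
    set τ := sInf E with hτdef
    have hτ0 : 0 ≤ τ := le_csInf hEne (fun t ht => ht.1)
    have hbef : ∀ s, 0 ≤ s → s < τ → φ (s, y) ∈ D := by
      intro s h1 h2
      by_contra hcc
      exact absurd (csInf_le hEbd ⟨h1, hcc⟩) (not_le.2 h2)
    have hτD : φ (τ, y) ∈ D := by
      by_contra hcc
      have hτpos : 0 < τ := by
        rcases hτ0.lt_or_eq with h | h
        · exact h
        · exfalso; apply hcc; rw [← h, h0]; exact hyD
      have hev : ∀ᶠ s in 𝓝 τ, φ (s, y) ∉ D :=
        ((hcont2 y).continuousAt).eventually_mem (hDc.isOpen_compl.mem_nhds hcc)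
      obtain ⟨δ, hδ, hδs⟩ := Metric.eventually_nhds_iff.1 hev
      set s₀ := max (τ - δ/2) (τ/2) with hs₀
      have hs₀lt : s₀ < τ := max_lt (by linarith) (by linarith)
      have hs₀pos : 0 < s₀ := lt_of_lt_of_le (by linarith) (le_max_right _ _)
      have hs₀dist : dist s₀ τ < δ := by
        rw [Real.dist_eq, abs_of_nonpos (by linarith)]
        have : τ - δ/2 ≤ s₀ := le_max_left _ _
        linarith
      exact absurd (csInf_le hEbd ⟨hs₀pos.le, hδs hs₀dist⟩) (not_le.2 hs₀lt)
    have hτfr : φ (τ, y) ∈ frontier D := by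
      rw [frontier_eq_closure_inter_closure, hDc.closure_eq]
      refine ⟨hτD, ?_⟩
      have hτcl : τ ∈ closure E := csInf_mem_closure hEne hEbd
      have h1 := (hcont2 y).continuousWithinAt.mem_closure_image hτcl
      refine closure_mono ?_ h1
      rw [image_subset_iff]
      exact fun t ht => ht.2
    refine ⟨φ (τ, y), hτfr, ?_, ?_⟩
    · intro s hs
      have heq : φ (s, φ (τ, y)) = φ (s + τ, y) := (hadd s τ y).symm
      rw [heq]
      rcases le_or_gt (s + τ) 0 with h | h
      · exact hyback _ h
      · rcases hs.lt_or_eq with h' | h'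
        · exact hbef _ h.le (by linarith)
        · rw [h', zero_add]; exact hτD
    · apply tendsto_bot_of_backward φ ⟨hc, h0, hadd⟩ p D hDc hlim
      intro s hs
      rw [← hadd]
      rcases le_or_gt (s + τ) 0 with h | h
      · exact hyback _ h
      · rcases hs.lt_or_eq with h' | h'
        · exact hbef _ h.le (by linarith)
        · rw [h', zero_add]; exact hτD
  · -- Case B: forward orbit stays in D
    push_neg at hexit
    have hall : ∀ t : ℝ, φ (t, y) ∈ D := by
      intro t
      rcases le_or_gt t 0 with h | h
      · exact hyback t h
      · exact hexit t h.le
    have htop : Tendsto (fun t => φ (t, y)) atTop (𝓝 p) :=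
      tendsto_top_of_forward φ ⟨hc, h0, hadd⟩ p D hDc hlim y (fun t _ => hall t)
    have hbot : Tendsto (fun t => φ (t, y)) atBot (𝓝 p) :=
      tendsto_bot_of_backward φ ⟨hc, h0, hadd⟩ p D hDc hlim y (fun t _ => hall t)
    by_cases hfr : ∃ τ : ℝ, φ (τ, y) ∈ frontier D
    · obtain ⟨τ, hτ⟩ := hfr
      refine ⟨φ (τ, y), hτ, ?_, ?_⟩
      · intro s _
        rw [← hadd]; exact hall _
      · have hcomp : Tendsto (fun t : ℝ => t + τ) atBot atBot :=
          tendsto_atBot_add_const_right atBot τ tendsto_id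
        have := hbot.comp hcomp
        convert this using 2 with t
        · exact (hadd t τ y).symm
    · -- Case B2: homoclinic orbit inside interior D: contradiction with shadowing
      exfalso
      push_neg at hfr
      have hyint : y ∈ interior D := by
        have h1 := hfr 0
        rw [h0] at h1
        rw [frontier_eq_closure_inter_closure, hDc.closure_eq] at h1
        have h2 : y ∉ closure Dᶜ := fun hcc => h1 ⟨hyD, hcc⟩
        rwa [closure_compl, mem_compl_iff, not_not] at h2
      obtain ⟨ρ, hρ, hρball⟩ := Metric.isOpen_iff.1 isOpen_interior y hyint
      have hdyp : 0 < dist y p := dist_pos.2 hyp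
      set ε := min (dist y p / 2) ρ with hεdef
      have hεpos : 0 < ε := lt_min (by linarith) hρ
      obtain ⟨d, hd, hshad⟩ := hsh ε hεpos
      obtain ⟨η, hη, huc⟩ := unif_cont φ hc hd
      obtain ⟨N₁, hN₁⟩ := Metric.tendsto_atTop.1 htop (η/2) (by positivity)
      obtain ⟨N₂, hN₂⟩ := eventually_atBot.1 (Metric.tendsto_nhds.1 hbot (η/2) (by positivity))
      set T := max 1 (max N₁ (-N₂)) with hTdef
      have hT1 : (1:ℝ) ≤ T := le_max_left _ _
      have hTpos : (0:ℝ) < T := lt_of_lt_of_le one_pos hT1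
      have hdT1 : dist (φ (T, y)) p < η/2 :=
        hN₁ T (le_trans (le_max_left _ _) (le_max_right _ _))
      have hdT2 : dist (φ (-T, y)) p < η/2 := by
        apply hN₂
        have : -N₂ ≤ T := le_trans (le_max_right _ _) (le_max_right _ _)
        linarith
      have hdTT : dist (φ (-T, y)) (φ (T, y)) < η := by
        calc dist (φ (-T, y)) (φ (T, y)) ≤ dist (φ (-T, y)) p + dist p (φ (T, y)) :=
          dist_triangle _ _ _
        _ < η/2 + η/2 := by
            apply add_lt_add hdT2
            rw [dist_comm]; exact hdT1
        _ = η := by ring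
      set P := 2 * T with hPdef
      have hPpos : (0:ℝ) < P := by positivity
      set wrap : ℝ → ℝ := fun t => t - P * ⌊(t + T) / P⌋ with hwrapdef
      have hfloor_bounds : ∀ t : ℝ, P * ⌊(t + T) / P⌋ ≤ t + T ∧ t + T < P * ⌊(t + T) / P⌋ + P := by
        intro t
        constructor
        · have h1 := Int.floor_le ((t + T) / P)
          calc P * (⌊(t + T) / P⌋ : ℝ) ≤ P * ((t + T) / P) :=
            mul_le_mul_of_nonneg_left h1 hPpos.le
          _ = t + T := by field_simp
        · have h1 := Int.lt_floor_add_one ((t + T) / P)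
          have h2 : t + T < P * ((⌊(t + T) / P⌋ : ℝ) + 1) := by
            calc t + T = P * ((t + T) / P) := by field_simp
            _ < P * ((⌊(t + T) / P⌋ : ℝ) + 1) := by
                apply mul_lt_mul_of_pos_left h1 hPpos
          linarith [h2]
      have hwrap_lb : ∀ t, -T ≤ wrap t := by
        intro t
        have := (hfloor_bounds t).1
        simp only [hwrapdef]
        linarith
      have hwrap_ub : ∀ t, wrap t < T := by
        intro t
        have := (hfloor_bounds t).2
        simp only [hwrapdef, hPdef]
        have hP : P = 2 * T := rfl
        linarith [hP ▸ this]
      set ξ : ℝ → M := fun t => φ (wrap t, y) with hξdef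
      have hpseudo : IsPseudo φ d ξ := by
        intro t s hs
        obtain ⟨hs0, hs1⟩ := hs
        set m := ⌊(t + T) / P⌋ with hmdef
        have hm1 : P * (m:ℝ) ≤ t + T := (hfloor_bounds t).1
        have hm2 : t + T < P * (m:ℝ) + P := (hfloor_bounds t).2
        have hwt : wrap t = t - P * (m:ℝ) := rfl
        by_cases hcase : wrap t + s < T
        · have hfl : ⌊(t + s + T) / P⌋ = m := by
            rw [Int.floor_eq_iff]
            constructor
            · rw [le_div_iff₀ hPpos]
              calc (m:ℝ) * P = P * m := mul_comm _ _
              _ ≤ t + T := hm1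
              _ ≤ t + s + T := by linarith
            · rw [div_lt_iff₀ hPpos]
              have hPT : P = 2 * T := rfl
              have : wrap t + s + T < 2 * T := by linarith
              calc t + s + T = (wrap t + s + T) + P * m := by rw [hwt]; ring
              _ < 2 * T + P * m := by linarith
              _ = ((m:ℝ) + 1) * P := by rw [hPT]; ring
          have hws : wrap (t + s) = wrap t + s := by
            simp only [hwrapdef]
            rw [hfl]
            push_cast
            ring
          show dist (φ (wrap (t + s), y)) (φ (s, φ (wrap t, y))) < d
          rw [hws, ← hadd, add_comm s (wrap t), dist_self]
          exact hd
        · push_neg at hcase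
          have hPT : P = 2 * T := rfl
          have hfl : ⌊(t + s + T) / P⌋ = m + 1 := by
            rw [Int.floor_eq_iff]
            push_cast
            constructor
            · rw [le_div_iff₀ hPpos]
              calc ((m:ℝ) + 1) * P = P * m + P := by ring
              _ = P * m + 2 * T := by rw [hPT]
              _ ≤ P * m + (wrap t + s + T) := by linarith
              _ = t + s + T := by rw [hwt]; ring
            · rw [div_lt_iff₀ hPpos]
              have h1 : wrap t + s + T < 2 * T + 1 := by
                have := hwrap_ub t
                linarith
              calc t + s + T = (wrap t + s + T) + P * m := by rw [hwt]; ring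
              _ < (2 * T + 1) + P * m := by linarith
              _ ≤ ((m:ℝ) + 1 + 1) * P := by
                  rw [hPT]
                  nlinarith [hTpos, hT1]
          set r := wrap t + s - T with hrdef
          have hr0 : 0 ≤ r := by simp only [hrdef]; linarith
          have hr1 : r ≤ 1 := by
            have := hwrap_ub t
            simp only [hrdef]
            linarith
          have e1 : wrap (t + s) = r + -T := by
            simp only [hrdef, hwrapdef]
            rw [hfl]
            push_cast
            rw [hPT]
            ring
          have e2 : ξ (t + s) = φ (r, φ (-T, y)) := by
            show φ (wrap (t + s), y) = φ (r, φ (-T, y))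
            rw [e1, hadd]
          have e3 : φ (s, ξ t) = φ (r, φ (T, y)) := by
            show φ (s, φ (wrap t, y)) = φ (r, φ (T, y))
            rw [← hadd, ← hadd]
            congr 1
            simp only [hrdef]
            ring
          show dist (ξ (t + s)) (φ (s, ξ t)) < d
          rw [e2, e3]
          exact huc _ _ hdTT r ⟨hr0, hr1⟩
      -- apply shadowing
      obtain ⟨x, h, ⟨hhc, hhbij, hhmono⟩, hclose⟩ := hshad ξ hpseudo
      have hξP : ∀ kk : ℕ, ξ (P * kk) = y := by
        intro kk
        have hfl : ⌊(P * (kk:ℝ) + T) / P⌋ = (kk:ℤ) := by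
          rw [Int.floor_eq_iff]
          push_cast
          constructor
          · rw [le_div_iff₀ hPpos]
            nlinarith [hTpos]
          · rw [div_lt_iff₀ hPpos]
            have hPT : P = 2 * T := rfl
            nlinarith [hTpos]
        show φ (wrap (P * kk), y) = y
        have : wrap (P * (kk:ℝ)) = 0 := by
          simp only [hwrapdef]
          rw [hfl]
          push_cast
          ring
        rw [this, h0]
      have hst : Tendsto (fun kk : ℕ => h (P * kk)) atTop atTop := by
        rw [Filter.tendsto_atTop]
        intro b
        obtain ⟨a, ha⟩ := hhbij.2 b
        have hPk : Tendsto (fun kk : ℕ => P * (kk:ℝ)) atTop atTop :=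
          (tendsto_natCast_atTop_atTop).const_mul_atTop hPpos
        filter_upwards [hPk.eventually_ge_atTop a] with kk hkk
        rw [← ha]
        exact hhmono.monotone hkk
      set v : ℕ → M := fun kk => φ (h (P * kk), x) with hvdef
      have hvclose : ∀ kk : ℕ, dist y (v kk) < ε := by
        intro kk
        have := hclose (P * kk)
        rwa [hξP kk] at this
      have hvD : ∀ kk, v kk ∈ D := by
        intro kk
        apply interior_subset
        apply hρball
        rw [mem_ball, dist_comm]
        exact lt_of_lt_of_le (hvclose kk) (min_le_right _ _)
      obtain ⟨q, kj, hkjm, hq⟩ := subseq_compact v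
      have hqD : q ∈ D := hDc.mem_of_tendsto hq (Eventually.of_forall fun j => hvD _)
      have hqω : q ∈ OmegaLim φ x := by
        simp only [OmegaLim, mem_setOf_eq]
        intro ε' hε' T'
        have h1 : ∀ᶠ j in atTop, dist (v (kj j)) q < ε' := Metric.tendsto_nhds.1 hq ε' hε'
        have h2 : ∀ᶠ j in atTop, T' < h (P * (kj j)) :=
          (hst.comp hkjm.tendsto_atTop).eventually_gt_atTop T'
        obtain ⟨j, hj1, hj2⟩ := (h1.and h2).exists
        exact ⟨h (P * (kj j)), hj2, hj1⟩
      have hqp : q = p := hlim x q hqD (Or.inr hqω)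
      have hyq : dist y q ≤ ε := by
        have htd : Tendsto (fun j => dist y (v (kj j))) atTop (𝓝 (dist y q)) :=
          tendsto_const_nhds.dist hq
        exact le_of_tendsto htd (Eventually.of_forall fun j => (hvclose _).le)
      rw [hqp] at hyq
      have : dist y p ≤ dist y p / 2 := le_trans hyq (min_le_left _ _)
      linarith

end Half

def revFlow {M : Type*} (φ : ℝ × M → M) : ℝ × M → M := fun q => φ (-q.1, q.2)

section Rev
variable {M : Type*} [MetricSpace M]

lemma isFlow_rev {φ : ℝ × M → M} (hφ : IsFlow φ) : IsFlow (revFlow φ) := by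
  obtain ⟨hc, h0, hadd⟩ := hφ
  refine ⟨hc.comp ((continuous_neg.comp continuous_fst).prodMk continuous_snd), ?_, ?_⟩
  · intro x; show φ (-0, x) = x; rw [neg_zero, h0]
  · intro s t x
    show φ (-(s + t), x) = φ (-s, φ (-t, x))
    rw [neg_add, hadd]

lemma isSingularity_rev {φ : ℝ × M → M} {p : M} (hp : IsSingularity φ p) :
    IsSingularity (revFlow φ) p := fun t => hp (-t)

lemma noLim_rev {φ : ℝ × M → M} {p : M} {D : Set M} (hlim : NoLimitPointsExcept φ p D) :
    NoLimitPointsExcept (revFlow φ) p D := by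
  intro x q hqD hmem
  apply hlim x q hqD
  rcases hmem with hα | hω
  · refine Or.inr ?_
    simp only [OmegaLim, mem_setOf_eq]
    intro ε hε T
    obtain ⟨t, ht, hd⟩ := hα ε hε (-T)
    refine ⟨-t, by linarith, ?_⟩
    simpa [revFlow] using hd
  · refine Or.inl ?_
    simp only [AlphaLim, mem_setOf_eq]
    intro ε hε T
    obtain ⟨t, ht, hd⟩ := hω ε hε (-T)
    refine ⟨-t, by linarith, ?_⟩
    simpa [revFlow] using hd

lemma back_of_rev {φ : ℝ × M → M} {p : M}
    (hst : IsAsympStable (revFlow φ) {p}) : IsBackAsympStable φ {p} := by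
  intro V hVo hpV
  obtain ⟨U, hUo, hpU, hU⟩ := hst V hVo hpV
  refine ⟨U, hUo, hpU, fun x hx => ⟨?_, ?_⟩⟩
  · intro t ht
    have := (hU x hx).1 (-t) (by linarith)
    simpa [revFlow] using this
  · have h2 := (hU x hx).2
    have h3 := h2.comp tendsto_neg_atBot_atTop
    have h4 : ((fun t => Metric.infDist (revFlow φ (t, x)) {p}) ∘ Neg.neg) =
        fun t => Metric.infDist (φ (t, x)) {p} := by
      funext t; simp [revFlow]
    rwa [h4] at h3

lemma shadowing_rev [CompactSpace M] {φ : ℝ × M → M} (hφ : IsFlow φ)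
    (hsh : OrientedShadowing φ) : OrientedShadowing (revFlow φ) := by
  obtain ⟨hc, h0, hadd⟩ := hφ
  intro ε hε
  obtain ⟨d, hd, hsh'⟩ := hsh ε hε
  obtain ⟨η, hη, huc⟩ := unif_cont φ hc hd
  refine ⟨η, hη, ?_⟩
  intro ξ hξ
  have hξ' : IsPseudo φ d (fun u => ξ (-u)) := by
    intro t s hs
    have hp1 := hξ (-(t + s)) s hs
    have heq : -(t + s) + s = -t := by ring
    rw [heq] at hp1
    -- hp1 : dist (ξ (-t)) (revFlow φ (s, ξ (-(t+s)))) < η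
    set a := ξ (-(t + s)) with ha
    set b := ξ (-t) with hb
    show dist a (φ (s, b)) < d
    have ha2 : a = φ (s, φ (-s, a)) := by
      rw [← hadd, add_neg_cancel, h0]
    calc dist a (φ (s, b)) = dist (φ (s, φ (-s, a))) (φ (s, b)) := by rw [← ha2]
    _ < d := huc _ _ (by rw [dist_comm]; exact hp1) s hs
  obtain ⟨x, h, ⟨hc', hbij', hmono'⟩, hcl⟩ := hsh' _ hξ'
  refine ⟨x, fun t => -h (-t), ⟨(hc'.comp continuous_neg).neg, ?_, ?_⟩, ?_⟩
  · constructor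
    · intro u v huv
      have : h (-u) = h (-v) := by linarith [neg_injective huv]
      have := hbij'.1 this
      linarith [neg_injective this]
    · intro c
      obtain ⟨a, ha⟩ := hbij'.2 (-c)
      refine ⟨-a, ?_⟩
      show -h (-(-a)) = c
      rw [neg_neg, ha, neg_neg]
  · intro u v huv
    have : h (-v) < h (-u) := hmono' (by linarith)
    show -h (-u) < -h (-v)
    linarith
  · intro t
    have := hcl (-t)
    rw [neg_neg] at this
    show dist (ξ t) (φ (-(-h (-t)), x)) < ε
    rwa [neg_neg]

end Rev

/-- a singularity that is neither asymptotically stable nor backward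
asymptotically stable has base orbits in `D` of both signs starting on `∂D`. -/
theorem exists_base_orbits {M : Type*} [MetricSpace M] [CompactSpace M]
    [ChartedSpace (EuclideanSpace ℝ (Fin 2)) M]
    (φ : ℝ × M → M) (hφ : IsFlow φ) (hsh : OrientedShadowing φ)
    (p : M) (hp : IsSingularity φ p)
    (D : Set M) (hD : IsDiskNbhd p D) (hlim : NoLimitPointsExcept φ p D)
    (hns : ¬ IsAsympStable φ {p}) (hnu : ¬ IsBackAsympStable φ {p}) :
    (∃ x ∈ frontier D, (∀ t ≤ (0:ℝ), φ (t, x) ∈ D) ∧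
        Tendsto (fun t => φ (t, x)) atBot (nhds p)) ∧
    (∃ y ∈ frontier D, (∀ t ≥ (0:ℝ), φ (t, y) ∈ D) ∧
        Tendsto (fun t => φ (t, y)) atTop (nhds p)) := by
  refine ⟨half φ hφ hsh p hp D hD.1 hD.2.1 hlim hns, ?_⟩
  obtain ⟨y, hyfr, hyb, hyt⟩ := half (revFlow φ) (isFlow_rev hφ) (shadowing_rev hφ hsh) p
    (isSingularity_rev hp) D hD.1 hD.2.1 (noLim_rev hlim) (fun hst => hnu (back_of_rev hst))
  refine ⟨y, hyfr, ?_, ?_⟩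
  · intro t ht
    have := hyb (-t) (by linarith)
    simpa [revFlow] using this
  · have h3 := hyt.comp tendsto_neg_atTop_atBot
    have h4 : ((fun t => revFlow φ (t, y)) ∘ Neg.neg) = fun t => φ (t, y) := by
      funext t; simp [revFlow]
    rwa [h4] at h3
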